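/- Assume sup_{ℓ≥1} ℓ|a_ℓ| < ∞. Then there exists C > 0 (depending only on the sequence a) such that for every κ > 0 and every x ∈ ℓ²_w the following hold: for each ℓ ≥ 1 the series defining F_ℓ(x,κ) := ℓ(2 − κ a_ℓ) x_ℓ − κ ∑_{j=1}^{ℓ−1} j a_j x_j x_{ℓ−j} − κ ∑_{j=ℓ+1}^{∞} (j a_j − (j−ℓ) a_{j−ℓ}) x_j x_{j−ℓ} converges absolutely, the sequence (F_ℓ(x,κ))_{ℓ≥1} is square-summable, and (∑_{ℓ≥1} F_ℓ(x,κ)²)^{1/2} ≤ C (1+κ) (‖x‖_w + ‖x‖_w²). In particular F(·,κ) is a well-defined map from ℓ²_w to ℓ². -/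
import Mathlib


open scoped BigOperators
open Filter Topology Real

noncomputable section

/-- `x` solves the stationary Fourier system at intensity `κ` for coefficients `a`:
for every `ℓ ≥ 1` the tail series converges absolutely (equivalently, is `Summable` in `ℝ`) and
`ℓ(2 − κ a_ℓ) x_ℓ = κ ∑_{j=1}^{ℓ−1} j a_j x_j x_{ℓ−j}
  + κ ∑_{j=ℓ+1}^∞ (j a_j − (j−ℓ) a_{j−ℓ}) x_j x_{j−ℓ}`,
where the infinite sum is indexed by `j = ℓ + k + 1`, `k : ℕ`. -/
def SolvesMV (a : ℕ → ℝ) (κ : ℝ) (x : ℕ → ℝ) : Prop :=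
  ∀ ℓ : ℕ, 1 ≤ ℓ →
    Summable (fun k : ℕ =>
      (((ℓ + k + 1 : ℕ) : ℝ) * a (ℓ + k + 1) - ((k + 1 : ℕ) : ℝ) * a (k + 1))
        * x (ℓ + k + 1) * x (k + 1)) ∧
    (ℓ : ℝ) * (2 - κ * a ℓ) * x ℓ
      = κ * ∑ j ∈ Finset.Ico 1 ℓ, (j : ℝ) * a j * x j * x (ℓ - j)
        + κ * ∑' k : ℕ,
            (((ℓ + k + 1 : ℕ) : ℝ) * a (ℓ + k + 1) - ((k + 1 : ℕ) : ℝ) * a (k + 1))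
              * x (ℓ + k + 1) * x (k + 1)

/-- The squared weighted norm `∑_{ℓ≥1} (1+ℓ²) x_ℓ²`. -/
def wnormSq (x : ℕ → ℝ) : ℝ := ∑' ℓ : ℕ, (1 + ((ℓ + 1 : ℕ) : ℝ) ^ 2) * x (ℓ + 1) ^ 2

/-- The weighted norm `‖x‖_w = (∑_{ℓ≥1} (1+ℓ²) x_ℓ²)^{1/2}`. -/
def wnorm (x : ℕ → ℝ) : ℝ := Real.sqrt (wnormSq x)

/-- Membership in the weighted space `ℓ²_w`. -/
def MemL2w (x : ℕ → ℝ) : Prop :=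
  Summable fun ℓ : ℕ => (1 + ((ℓ + 1 : ℕ) : ℝ) ^ 2) * x (ℓ + 1) ^ 2

/-- The map `F_ℓ(x,κ)`. -/
def Fmap (a : ℕ → ℝ) (κ : ℝ) (x : ℕ → ℝ) (ℓ : ℕ) : ℝ :=
  (ℓ : ℝ) * (2 - κ * a ℓ) * x ℓ
    - κ * ∑ j ∈ Finset.Ico 1 ℓ, (j : ℝ) * a j * x j * x (ℓ - j)
    - κ * ∑' k : ℕ,
        (((ℓ + k + 1 : ℕ) : ℝ) * a (ℓ + k + 1) - ((k + 1 : ℕ) : ℝ) * a (k + 1))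
          * x (ℓ + k + 1) * x (k + 1)

/-- under `sup_ℓ ℓ|a_ℓ| < ∞`, `F(·,κ)` is a well-defined map `ℓ²_w → ℓ²`,
with the quantitative bound `‖F(x,κ)‖_{ℓ²} ≤ C (1+κ)(‖x‖_w + ‖x‖_w²)`. -/
lemma abs_tsum_le_tsum_abs' {f : ℕ → ℝ} (h : Summable fun n => |f n|) :
    |∑' n, f n| ≤ ∑' n, |f n| := by
  simpa only [Real.norm_eq_abs] using
    norm_tsum_le_tsum_norm (f := f) (by simpa only [Real.norm_eq_abs] using h)

set_option maxHeartbeats 2000000 in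
theorem Fmap_well_defined
    (a : ℕ → ℝ) (hA : ∃ C : ℝ, ∀ ℓ : ℕ, 1 ≤ ℓ → (ℓ : ℝ) * |a ℓ| ≤ C) :
    ∃ C : ℝ, 0 < C ∧ ∀ κ : ℝ, 0 < κ → ∀ x : ℕ → ℝ, MemL2w x →
      (∀ ℓ : ℕ, 1 ≤ ℓ →
        Summable fun k : ℕ =>
          |(((ℓ + k + 1 : ℕ) : ℝ) * a (ℓ + k + 1) - ((k + 1 : ℕ) : ℝ) * a (k + 1))
            * x (ℓ + k + 1) * x (k + 1)|) ∧
      Summable (fun ℓ : ℕ => Fmap a κ x (ℓ + 1) ^ 2) ∧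
      Real.sqrt (∑' ℓ : ℕ, Fmap a κ x (ℓ + 1) ^ 2)
        ≤ C * (1 + κ) * (wnorm x + wnorm x ^ 2) := by
  classical
  obtain ⟨C₀, hC₀⟩ := hA
  set A : ℝ := max C₀ 1 with hAdef
  have hA1 : (1:ℝ) ≤ A := le_max_right _ _
  have hA0 : (0:ℝ) < A := by linarith
  have hAb : ∀ ℓ : ℕ, 1 ≤ ℓ → (ℓ:ℝ) * |a ℓ| ≤ A := fun ℓ hℓ =>
    (hC₀ ℓ hℓ).trans (le_max_left _ _)
  have hab : ∀ ℓ : ℕ, 1 ≤ ℓ → |a ℓ| ≤ A := by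
    intro ℓ hℓ
    have h1 : (1:ℝ) ≤ (ℓ:ℝ) := by exact_mod_cast hℓ
    nlinarith [hAb ℓ hℓ, abs_nonneg (a ℓ)]
  -- summable p-series
  have hps : Summable (fun ℓ : ℕ => (1 / ((ℓ:ℝ)+1)) ^ 2) := by
    have h0 : Summable (fun n : ℕ => 1 / (n:ℝ) ^ 2) :=
      Real.summable_one_div_nat_pow.mpr one_lt_two
    have h1 := (summable_nat_add_iff (f := fun n : ℕ => 1 / (n:ℝ)^2) 1).mpr h0
    refine h1.congr fun n => ?_
    push_cast
    rw [div_pow, one_pow]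
  set s : ℝ := ∑' ℓ : ℕ, (1 / ((ℓ:ℝ)+1)) ^ 2 with hsdef
  have hs0 : 0 ≤ s := tsum_nonneg fun _ => sq_nonneg _
  refine ⟨8 * A * (s + 1), by positivity, ?_⟩
  intro κ hκ x hx
  set Q : ℝ := wnormSq x with hQdef
  have hQ0 : 0 ≤ Q := tsum_nonneg fun i => by positivity
  set N : ℝ := wnorm x with hNdef
  have hN0 : 0 ≤ N := Real.sqrt_nonneg _
  have hNsq : N ^ 2 = Q := Real.sq_sqrt hQ0
  -- pointwise bounds
  have hxN : ∀ m : ℕ, 1 ≤ m → (m:ℝ) * |x m| ≤ N := by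
    intro m hm
    obtain ⟨p, rfl⟩ : ∃ p, m = p + 1 := ⟨m - 1, (Nat.succ_pred_eq_of_pos hm).symm⟩
    have hterm : (1 + ((p + 1 : ℕ) : ℝ) ^ 2) * x (p + 1) ^ 2 ≤ Q :=
      Summable.le_tsum hx p fun i _ => by positivity
    have h2 : (((p + 1 : ℕ) : ℝ) * |x (p + 1)|) ^ 2 ≤ Q := by
      rw [mul_pow, sq_abs]; nlinarith [sq_nonneg (x (p+1))]
    have h3 := Real.sqrt_le_sqrt h2
    rwa [Real.sqrt_sq (by positivity)] at h3
  have hxN' : ∀ m : ℕ, 1 ≤ m → |x m| ≤ N := by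
    intro m hm
    have h1 : (1:ℝ) ≤ (m:ℝ) := by exact_mod_cast hm
    nlinarith [hxN m hm, abs_nonneg (x m)]
  -- ℓ¹ bound via Cauchy-Schwarz
  have hfin : ∀ u : Finset ℕ, ∑ k ∈ u, |x (k + 1)| ≤ Real.sqrt s * N := by
    intro u
    have key : ∀ k : ℕ, |x (k + 1)| =
        (1 / Real.sqrt (1 + ((k + 1 : ℕ) : ℝ) ^ 2)) *
          (Real.sqrt (1 + ((k + 1 : ℕ) : ℝ) ^ 2) * |x (k + 1)|) := by
      intro k
      have hw : Real.sqrt (1 + ((k + 1 : ℕ) : ℝ) ^ 2) ≠ 0 := by positivity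
      field_simp
    calc ∑ k ∈ u, |x (k + 1)|
        = ∑ k ∈ u, (1 / Real.sqrt (1 + ((k + 1 : ℕ) : ℝ) ^ 2)) *
            (Real.sqrt (1 + ((k + 1 : ℕ) : ℝ) ^ 2) * |x (k + 1)|) :=
          Finset.sum_congr rfl fun k _ => key k
      _ ≤ Real.sqrt (∑ k ∈ u, (1 / Real.sqrt (1 + ((k + 1 : ℕ) : ℝ) ^ 2)) ^ 2) *
            Real.sqrt (∑ k ∈ u, (Real.sqrt (1 + ((k + 1 : ℕ) : ℝ) ^ 2) * |x (k + 1)|) ^ 2) :=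
          Real.sum_mul_le_sqrt_mul_sqrt _ _ _
      _ ≤ Real.sqrt s * N := by
          have h1 : ∑ k ∈ u, (1 / Real.sqrt (1 + ((k + 1 : ℕ) : ℝ) ^ 2)) ^ 2 ≤ s := by
            have hstep : ∀ k ∈ u, (1 / Real.sqrt (1 + ((k + 1 : ℕ) : ℝ) ^ 2)) ^ 2
                ≤ (1 / ((k:ℝ)+1)) ^ 2 := by
              intro k _
              rw [div_pow, one_pow, Real.sq_sqrt (by positivity), div_pow, one_pow]
              apply one_div_le_one_div_of_le (by positivity)
              push_cast; nlinarith
            exact le_trans (Finset.sum_le_sum hstep)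
              (Summable.sum_le_tsum u (fun i _ => by positivity) hps)
          have h2 : ∑ k ∈ u, (Real.sqrt (1 + ((k + 1 : ℕ) : ℝ) ^ 2) * |x (k + 1)|) ^ 2 ≤ Q := by
            refine le_trans (le_of_eq (Finset.sum_congr rfl fun k _ => ?_))
              (Summable.sum_le_tsum u (fun i _ => by positivity) hx)
            rw [mul_pow, Real.sq_sqrt (by positivity), sq_abs]
          exact mul_le_mul (Real.sqrt_le_sqrt h1) (Real.sqrt_le_sqrt h2)
            (Real.sqrt_nonneg _) (Real.sqrt_nonneg _)
  have habs : Summable (fun k : ℕ => |x (k + 1)|) :=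
    summable_of_sum_le (fun _ => abs_nonneg _) hfin
  set T : ℝ := ∑' k : ℕ, |x (k + 1)| with hTdef
  have hT0 : 0 ≤ T := tsum_nonneg fun _ => abs_nonneg _
  have hTle : T ≤ Real.sqrt s * N :=
    Summable.tsum_le_of_sum_range_le habs fun n => hfin _
  have hT2 : T ^ 2 ≤ s * N ^ 2 := by
    have := Real.sq_sqrt hs0
    nlinarith [hTle, Real.sqrt_nonneg s]
  -- finite-sum ℓ¹ bounds
  have hsum1 : ∀ L : ℕ, ∑ j ∈ Finset.Ico 1 L, |x j| ≤ T := by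
    intro L
    rw [Finset.sum_Ico_eq_sum_range]
    refine le_trans (le_of_eq (Finset.sum_congr rfl fun i _ => by rw [add_comm 1 i])) ?_
    exact Summable.sum_le_tsum _ (fun i _ => abs_nonneg _) habs
  have hsum2 : ∀ L : ℕ, ∑ j ∈ Finset.Ico 1 L, |x (L - j)| ≤ T := by
    intro L
    rw [Finset.sum_Ico_eq_sum_range]
    have hre : ∀ i ∈ Finset.range (L - 1), |x (L - (1 + i))| = |x ((L - 1) - 1 - i + 1)| := by
      intro i hi
      simp only [Finset.mem_range] at hi
      have : L - (1 + i) = (L - 1) - 1 - i + 1 := by omega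
      rw [this]
    rw [Finset.sum_congr rfl hre, Finset.sum_range_reflect (fun m => |x (m + 1)|) (L - 1)]
    exact Summable.sum_le_tsum _ (fun i _ => abs_nonneg _) habs
  -- per-index bounds (L ≥ 1)
  have htermb : ∀ L : ℕ, 1 ≤ L → ∀ k : ℕ,
      |(((L + k + 1 : ℕ) : ℝ) * a (L + k + 1) - ((k + 1 : ℕ) : ℝ) * a (k + 1))
        * x (L + k + 1) * x (k + 1)| ≤ (2 * A * N / (L:ℝ)) * |x (k + 1)| := by
    intro L hL k
    have hL0 : (0:ℝ) < (L:ℝ) := by exact_mod_cast hL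
    have hc : |(((L + k + 1 : ℕ) : ℝ) * a (L + k + 1) - ((k + 1 : ℕ) : ℝ) * a (k + 1))| ≤ 2 * A := by
      have h1 := hAb (L + k + 1) (by omega)
      have h2 := hAb (k + 1) (by omega)
      have h3 : |(((L + k + 1 : ℕ) : ℝ) * a (L + k + 1) - ((k + 1 : ℕ) : ℝ) * a (k + 1))|
          ≤ ((L + k + 1 : ℕ) : ℝ) * |a (L + k + 1)| + ((k + 1 : ℕ) : ℝ) * |a (k + 1)| := by
        refine le_trans (abs_sub _ _) ?_
        rw [abs_mul, abs_mul, Nat.abs_cast, Nat.abs_cast]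
      linarith
    have hxb : |x (L + k + 1)| ≤ N / (L:ℝ) := by
      rw [le_div_iff₀ hL0, mul_comm]
      calc (L:ℝ) * |x (L + k + 1)| ≤ ((L + k + 1 : ℕ) : ℝ) * |x (L + k + 1)| := by
            have : (L:ℝ) ≤ ((L + k + 1 : ℕ) : ℝ) := by push_cast; linarith [Nat.cast_nonneg (α := ℝ) k]
            exact mul_le_mul_of_nonneg_right this (abs_nonneg _)
        _ ≤ N := hxN _ (by omega)
    rw [abs_mul, abs_mul]
    have h4 : |(((L + k + 1 : ℕ) : ℝ) * a (L + k + 1) - ((k + 1 : ℕ) : ℝ) * a (k + 1))| *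
        |x (L + k + 1)| ≤ (2 * A) * (N / (L:ℝ)) := by
      exact mul_le_mul hc hxb (abs_nonneg _) (by positivity)
    calc |(((L + k + 1 : ℕ) : ℝ) * a (L + k + 1) - ((k + 1 : ℕ) : ℝ) * a (k + 1))| *
          |x (L + k + 1)| * |x (k + 1)|
        ≤ (2 * A) * (N / (L:ℝ)) * |x (k + 1)| :=
          mul_le_mul_of_nonneg_right h4 (abs_nonneg _)
      _ = (2 * A * N / (L:ℝ)) * |x (k + 1)| := by ring
  have hsumabs : ∀ L : ℕ, 1 ≤ L → Summable (fun k : ℕ =>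
      |(((L + k + 1 : ℕ) : ℝ) * a (L + k + 1) - ((k + 1 : ℕ) : ℝ) * a (k + 1))
        * x (L + k + 1) * x (k + 1)|) := by
    intro L hL
    exact Summable.of_nonneg_of_le (fun _ => abs_nonneg _) (htermb L hL) (habs.mul_left _)
  have hS2 : ∀ L : ℕ, 1 ≤ L →
      |∑' k : ℕ, (((L + k + 1 : ℕ) : ℝ) * a (L + k + 1) - ((k + 1 : ℕ) : ℝ) * a (k + 1))
        * x (L + k + 1) * x (k + 1)| ≤ 2 * A * N * T / (L:ℝ) := by
    intro L hL
    have h1 : |∑' k : ℕ, (((L + k + 1 : ℕ) : ℝ) * a (L + k + 1) - ((k + 1 : ℕ) : ℝ) * a (k + 1))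
        * x (L + k + 1) * x (k + 1)| ≤ ∑' k : ℕ,
        |(((L + k + 1 : ℕ) : ℝ) * a (L + k + 1) - ((k + 1 : ℕ) : ℝ) * a (k + 1))
        * x (L + k + 1) * x (k + 1)| := by
      exact abs_tsum_le_tsum_abs' (hsumabs L hL)
    refine h1.trans ?_
    have h2 := Summable.tsum_le_tsum (htermb L hL) (hsumabs L hL) (habs.mul_left _)
    rw [tsum_mul_left] at h2
    calc _ ≤ (2 * A * N / (L:ℝ)) * T := h2
      _ = 2 * A * N * T / (L:ℝ) := by ring
  have hS1 : ∀ L : ℕ, 1 ≤ L →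
      |∑ j ∈ Finset.Ico 1 L, (j : ℝ) * a j * x j * x (L - j)| ≤ 2 * A * N * T / (L:ℝ) := by
    intro L hL
    have hL0 : (0:ℝ) < (L:ℝ) := by exact_mod_cast hL
    set σ : ℝ := ∑ j ∈ Finset.Ico 1 L, |x j| * |x (L - j)| with hσdef
    have hstep1 : |∑ j ∈ Finset.Ico 1 L, (j : ℝ) * a j * x j * x (L - j)| ≤ A * σ := by
      refine le_trans (Finset.abs_sum_le_sum_abs _ _) ?_
      rw [hσdef, Finset.mul_sum]
      refine Finset.sum_le_sum fun j hj => ?_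
      simp only [Finset.mem_Ico] at hj
      rw [abs_mul, abs_mul, abs_mul, Nat.abs_cast]
      calc (j:ℝ) * |a j| * |x j| * |x (L - j)| ≤ A * |x j| * |x (L - j)| :=
            mul_le_mul_of_nonneg_right
              (mul_le_mul_of_nonneg_right (hAb j hj.1) (abs_nonneg _)) (abs_nonneg _)
        _ = A * (|x j| * |x (L - j)|) := by ring
    have hstep3 : (L:ℝ) * σ ≤ 2 * N * T := by
      have hsplit : (L:ℝ) * σ = (∑ j ∈ Finset.Ico 1 L, ((j:ℝ) * |x j|) * |x (L - j)|)
          + ∑ j ∈ Finset.Ico 1 L, |x j| * (((L - j : ℕ):ℝ) * |x (L - j)|) := by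
        rw [hσdef, Finset.mul_sum, ← Finset.sum_add_distrib]
        refine Finset.sum_congr rfl fun j hj => ?_
        simp only [Finset.mem_Ico] at hj
        have hcast : ((L - j : ℕ):ℝ) = (L:ℝ) - (j:ℝ) := by
          rw [Nat.cast_sub (le_of_lt hj.2)]
        rw [hcast]; ring
      have hb1 : (∑ j ∈ Finset.Ico 1 L, ((j:ℝ) * |x j|) * |x (L - j)|) ≤ N * T := by
        calc (∑ j ∈ Finset.Ico 1 L, ((j:ℝ) * |x j|) * |x (L - j)|)
            ≤ ∑ j ∈ Finset.Ico 1 L, N * |x (L - j)| := by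
              refine Finset.sum_le_sum fun j hj => ?_
              simp only [Finset.mem_Ico] at hj
              exact mul_le_mul_of_nonneg_right (hxN j hj.1) (abs_nonneg _)
          _ = N * ∑ j ∈ Finset.Ico 1 L, |x (L - j)| := by rw [Finset.mul_sum]
          _ ≤ N * T := mul_le_mul_of_nonneg_left (hsum2 L) hN0
      have hb2 : (∑ j ∈ Finset.Ico 1 L, |x j| * (((L - j : ℕ):ℝ) * |x (L - j)|)) ≤ N * T := by
        calc (∑ j ∈ Finset.Ico 1 L, |x j| * (((L - j : ℕ):ℝ) * |x (L - j)|))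
            ≤ ∑ j ∈ Finset.Ico 1 L, |x j| * N := by
              refine Finset.sum_le_sum fun j hj => ?_
              simp only [Finset.mem_Ico] at hj
              exact mul_le_mul_of_nonneg_left (hxN (L - j) (by omega)) (abs_nonneg _)
          _ = (∑ j ∈ Finset.Ico 1 L, |x j|) * N := by rw [← Finset.sum_mul]
          _ ≤ T * N := mul_le_mul_of_nonneg_right (hsum1 L) hN0
          _ = N * T := by ring
      linarith [hsplit ▸ (add_le_add hb1 hb2)]
    have hσb : σ ≤ 2 * N * T / (L:ℝ) := by
      rw [le_div_iff₀ hL0]; linarith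
    calc |∑ j ∈ Finset.Ico 1 L, (j : ℝ) * a j * x j * x (L - j)| ≤ A * σ := hstep1
      _ ≤ A * (2 * N * T / (L:ℝ)) := mul_le_mul_of_nonneg_left hσb (le_of_lt hA0)
      _ = 2 * A * N * T / (L:ℝ) := by ring
  -- linear part
  have hlin : ∀ L : ℕ, 1 ≤ L →
      |(L : ℝ) * (2 - κ * a L) * x L| ≤ (2 + κ * A) * ((L:ℝ) * |x L|) := by
    intro L hL
    rw [abs_mul, abs_mul, Nat.abs_cast]
    have h1 : |2 - κ * a L| ≤ 2 + κ * A := by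
      refine le_trans (abs_sub _ _) ?_
      rw [abs_mul, abs_of_pos hκ, abs_two]
      nlinarith [mul_le_mul_of_nonneg_left (hab L hL) hκ.le]
    have hLnn : (0:ℝ) ≤ (L:ℝ) := Nat.cast_nonneg _
    calc (L:ℝ) * |2 - κ * a L| * |x L| ≤ (L:ℝ) * (2 + κ * A) * |x L| :=
          mul_le_mul_of_nonneg_right (mul_le_mul_of_nonneg_left h1 hLnn) (abs_nonneg _)
      _ = (2 + κ * A) * ((L:ℝ) * |x L|) := by ring
  -- total pointwise bound on Fmap
  have hF : ∀ L : ℕ, 1 ≤ L →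
      |Fmap a κ x L| ≤ (2 + κ * A) * ((L:ℝ) * |x L|) + (4 * κ * A * N * T) / (L:ℝ) := by
    intro L hL
    have h1 := hlin L hL
    have h2 := hS1 L hL
    have h3 := hS2 L hL
    set P : ℝ := (L : ℝ) * (2 - κ * a L) * x L with hP
    set S₁ : ℝ := ∑ j ∈ Finset.Ico 1 L, (j : ℝ) * a j * x j * x (L - j) with hS₁
    set S₂ : ℝ := ∑' k : ℕ,
        (((L + k + 1 : ℕ) : ℝ) * a (L + k + 1) - ((k + 1 : ℕ) : ℝ) * a (k + 1))
          * x (L + k + 1) * x (k + 1) with hS₂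
    have hFdef : Fmap a κ x L = P - κ * S₁ - κ * S₂ := rfl
    rw [hFdef]
    have ha : |P - κ * S₁ - κ * S₂| ≤ |P| + κ * |S₁| + κ * |S₂| := by
      calc |P - κ * S₁ - κ * S₂| ≤ |P - κ * S₁| + |κ * S₂| := abs_sub _ _
        _ ≤ |P| + |κ * S₁| + |κ * S₂| := by linarith [abs_sub P (κ * S₁)]
        _ = |P| + κ * |S₁| + κ * |S₂| := by
            rw [abs_mul κ S₁, abs_mul κ S₂, abs_of_pos hκ]
    have hb2 : κ * |S₁| ≤ κ * (2 * A * N * T / (L:ℝ)) :=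
      mul_le_mul_of_nonneg_left h2 hκ.le
    have hb3 : κ * |S₂| ≤ κ * (2 * A * N * T / (L:ℝ)) :=
      mul_le_mul_of_nonneg_left h3 hκ.le
    have heq : κ * (2 * A * N * T / (L:ℝ)) + κ * (2 * A * N * T / (L:ℝ))
        = (4 * κ * A * N * T) / (L:ℝ) := by ring
    linarith
  -- summability of squares
  set c₁ : ℝ := 2 * (2 + κ * A) ^ 2 with hc₁
  set c₂ : ℝ := 2 * (4 * κ * A * N * T) ^ 2 with hc₂
  have hc₁0 : 0 ≤ c₁ := by positivity
  have hc₂0 : 0 ≤ c₂ := by positivity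
  have hg1 : Summable (fun ℓ : ℕ => ((ℓ + 1 : ℕ) : ℝ) ^ 2 * x (ℓ + 1) ^ 2) := by
    refine Summable.of_nonneg_of_le (fun _ => by positivity) (fun ℓ => ?_) hx
    nlinarith [sq_nonneg (x (ℓ + 1))]
  have hg1le : ∑' ℓ : ℕ, ((ℓ + 1 : ℕ) : ℝ) ^ 2 * x (ℓ + 1) ^ 2 ≤ Q := by
    refine Summable.tsum_le_tsum (fun ℓ => ?_) hg1 hx
    nlinarith [sq_nonneg (x (ℓ + 1))]
  have hBsum : Summable (fun ℓ : ℕ => c₁ * (((ℓ + 1 : ℕ) : ℝ) ^ 2 * x (ℓ + 1) ^ 2)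
      + c₂ * (1 / ((ℓ:ℝ)+1)) ^ 2) := (hg1.mul_left c₁).add (hps.mul_left c₂)
  have hFB : ∀ ℓ : ℕ, Fmap a κ x (ℓ + 1) ^ 2
      ≤ c₁ * (((ℓ + 1 : ℕ) : ℝ) ^ 2 * x (ℓ + 1) ^ 2) + c₂ * (1 / ((ℓ:ℝ)+1)) ^ 2 := by
    intro ℓ
    have hL : (1:ℕ) ≤ ℓ + 1 := by omega
    have h1 := hF (ℓ + 1) hL
    have hd : (0:ℝ) < ((ℓ + 1 : ℕ):ℝ) := by positivity
    have hcast : ((ℓ + 1 : ℕ):ℝ) = (ℓ:ℝ) + 1 := by push_cast; ring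
    set u : ℝ := (2 + κ * A) * (((ℓ + 1 : ℕ):ℝ) * |x (ℓ + 1)|) with hu
    set v : ℝ := (4 * κ * A * N * T) / ((ℓ + 1 : ℕ):ℝ) with hv
    have hu0 : 0 ≤ u := by positivity
    have hv0 : 0 ≤ v := by positivity
    set F : ℝ := Fmap a κ x (ℓ + 1) with hFset
    clear_value F u v
    have hsq : F ^ 2 ≤ (u + v) ^ 2 := by
      rw [← sq_abs F]
      exact pow_le_pow_left₀ (abs_nonneg _) h1 2
    have hexp : (u + v) ^ 2 ≤ 2 * u ^ 2 + 2 * v ^ 2 := by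
      calc (u + v) ^ 2 = u ^ 2 + 2 * u * v + v ^ 2 := by ring
        _ ≤ u ^ 2 + (u ^ 2 + v ^ 2) + v ^ 2 := by linarith [two_mul_le_add_sq u v]
        _ = 2 * u ^ 2 + 2 * v ^ 2 := by ring
    have hu2 : 2 * u ^ 2 = c₁ * (((ℓ + 1 : ℕ) : ℝ) ^ 2 * |x (ℓ + 1)| ^ 2) := by
      rw [hu, hc₁]; ring
    have hv2 : 2 * v ^ 2 = c₂ * (1 / ((ℓ:ℝ)+1)) ^ 2 := by
      rw [hv, hc₂, hcast]
      have hne : ((ℓ:ℝ)+1) ≠ 0 := by positivity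
      field_simp
    calc F ^ 2 ≤ 2 * u ^ 2 + 2 * v ^ 2 := hsq.trans hexp
      _ = c₁ * (((ℓ + 1 : ℕ) : ℝ) ^ 2 * x (ℓ + 1) ^ 2) + c₂ * (1 / ((ℓ:ℝ)+1)) ^ 2 := by
          rw [hu2, hv2, sq_abs]
  have hFsum : Summable (fun ℓ : ℕ => Fmap a κ x (ℓ + 1) ^ 2) :=
    Summable.of_nonneg_of_le (fun _ => sq_nonneg _) hFB hBsum
  refine ⟨fun ℓ hℓ => hsumabs ℓ hℓ, hFsum, ?_⟩
  -- final bound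
  clear hC₀ hAb hab hfin hxN hxN' hsum1 hsum2 htermb hsumabs hS2 hS1 hlin hF
  have hts : ∑' ℓ : ℕ, Fmap a κ x (ℓ + 1) ^ 2 ≤ c₁ * Q + c₂ * s := by
    calc ∑' ℓ : ℕ, Fmap a κ x (ℓ + 1) ^ 2
        ≤ ∑' ℓ : ℕ, (c₁ * (((ℓ + 1 : ℕ) : ℝ) ^ 2 * x (ℓ + 1) ^ 2) + c₂ * (1 / ((ℓ:ℝ)+1)) ^ 2) :=
          Summable.tsum_le_tsum hFB hFsum hBsum
      _ = c₁ * (∑' ℓ : ℕ, ((ℓ + 1 : ℕ) : ℝ) ^ 2 * x (ℓ + 1) ^ 2) + c₂ * s := by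
          rw [Summable.tsum_add (hg1.mul_left c₁) (hps.mul_left c₂), tsum_mul_left, tsum_mul_left]
      _ ≤ c₁ * Q + c₂ * s := by
          have := mul_le_mul_of_nonneg_left hg1le hc₁0
          linarith
  clear hx habs hg1 hg1le hps hBsum hFsum hFB
  clear_value s Q N T
  have hRHS0 : 0 ≤ 8 * A * (s + 1) * (1 + κ) * (N + N ^ 2) := by
    have h1 : (0:ℝ) ≤ 8 * A := by linarith
    have h2 : (0:ℝ) ≤ s + 1 := by linarith
    have h3 : (0:ℝ) ≤ 1 + κ := by linarith
    have h4 : (0:ℝ) ≤ N + N ^ 2 := by nlinarith [sq_nonneg N]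
    exact mul_nonneg (mul_nonneg (mul_nonneg h1 h2) h3) h4
  have hkey : c₁ * Q + c₂ * s ≤ (8 * A * (s + 1) * (1 + κ) * (N + N ^ 2)) ^ 2 := by
    have h1 : c₁ * Q ≤ 8 * A ^ 2 * (1 + κ) ^ 2 * N ^ 2 := by
      rw [hc₁, ← hNsq]
      have hκA : 0 ≤ κ * A := mul_nonneg hκ.le hA0.le
      have hd : 2 + κ * A ≤ 2 * A * (1 + κ) := by nlinarith
      have hd0 : (0:ℝ) ≤ 2 + κ * A := by linarith
      have hd2 : (2 + κ * A) ^ 2 ≤ (2 * A * (1 + κ)) ^ 2 := pow_le_pow_left₀ hd0 hd 2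
      have hd3 := mul_le_mul_of_nonneg_right hd2 (sq_nonneg N)
      calc 2 * (2 + κ * A) ^ 2 * N ^ 2 = 2 * ((2 + κ * A) ^ 2 * N ^ 2) := by ring
        _ ≤ 2 * ((2 * A * (1 + κ)) ^ 2 * N ^ 2) := by linarith
        _ = 8 * A ^ 2 * (1 + κ) ^ 2 * N ^ 2 := by ring
    have h2 : c₂ * s ≤ 32 * A ^ 2 * (1 + κ) ^ 2 * s ^ 2 * N ^ 4 := by
      have hT2' : T ^ 2 * s ≤ s ^ 2 * N ^ 2 := by
        have h := mul_le_mul_of_nonneg_right hT2 hs0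
        calc T ^ 2 * s ≤ s * N ^ 2 * s := h
          _ = s ^ 2 * N ^ 2 := by ring
      have e1 : c₂ * s = 32 * κ ^ 2 * A ^ 2 * N ^ 2 * (T ^ 2 * s) := by rw [hc₂]; ring
      have e2 : 32 * κ ^ 2 * A ^ 2 * N ^ 2 * (T ^ 2 * s)
          ≤ 32 * κ ^ 2 * A ^ 2 * N ^ 2 * (s ^ 2 * N ^ 2) :=
        mul_le_mul_of_nonneg_left hT2' (by positivity)
      have e4 : 32 * κ ^ 2 * A ^ 2 * N ^ 2 * (s ^ 2 * N ^ 2)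
          ≤ 32 * A ^ 2 * (1 + κ) ^ 2 * s ^ 2 * N ^ 4 := by
        have hk2 : κ ^ 2 ≤ (1 + κ) ^ 2 := by nlinarith
        nlinarith [mul_nonneg (mul_nonneg (sq_nonneg A) (sq_nonneg s)) (sq_nonneg (N * N))]
      linarith
    have h3 : 8 * A ^ 2 * (1 + κ) ^ 2 * N ^ 2 + 32 * A ^ 2 * (1 + κ) ^ 2 * s ^ 2 * N ^ 4
        ≤ (8 * A * (s + 1) * (1 + κ) * (N + N ^ 2)) ^ 2 := by
      have hR0 : (0:ℝ) ≤ A ^ 2 * (1 + κ) ^ 2 := mul_nonneg (sq_nonneg _) (sq_nonneg _)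
      have key2 : 8 * N ^ 2 + 32 * s ^ 2 * N ^ 4 ≤ 64 * (s + 1) ^ 2 * (N + N ^ 2) ^ 2 := by
        nlinarith [mul_nonneg (mul_nonneg hs0 hs0) (pow_nonneg hN0 2),
          mul_nonneg (mul_nonneg hs0 hs0) (pow_nonneg hN0 3),
          mul_nonneg (mul_nonneg hs0 hs0) (pow_nonneg hN0 4),
          mul_nonneg hs0 (pow_nonneg hN0 2), mul_nonneg hs0 (pow_nonneg hN0 3),
          mul_nonneg hs0 (pow_nonneg hN0 4),
          pow_nonneg hN0 2, pow_nonneg hN0 3, pow_nonneg hN0 4]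
      have hmul := mul_le_mul_of_nonneg_left key2 hR0
      calc 8 * A ^ 2 * (1 + κ) ^ 2 * N ^ 2 + 32 * A ^ 2 * (1 + κ) ^ 2 * s ^ 2 * N ^ 4
          = A ^ 2 * (1 + κ) ^ 2 * (8 * N ^ 2 + 32 * s ^ 2 * N ^ 4) := by ring
        _ ≤ A ^ 2 * (1 + κ) ^ 2 * (64 * (s + 1) ^ 2 * (N + N ^ 2) ^ 2) := hmul
        _ = (8 * A * (s + 1) * (1 + κ) * (N + N ^ 2)) ^ 2 := by ring
    linarith
  calc Real.sqrt (∑' ℓ : ℕ, Fmap a κ x (ℓ + 1) ^ 2)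
      ≤ Real.sqrt ((8 * A * (s + 1) * (1 + κ) * (N + N ^ 2)) ^ 2) :=
        Real.sqrt_le_sqrt (hts.trans hkey)
    _ = 8 * A * (s + 1) * (1 + κ) * (N + N ^ 2) := Real.sqrt_sq hRHS0
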